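/- Let R be a commutative ring and f_1, ..., f_r a regular sequence in R. Then the Koszul complex K_•(f_1,...,f_r) is a resolution of R/(f_1,...,f_r), i.e., its homology vanishes in negative degrees and equals R/(f_1,...,f_r) in degree zero. -/

import Mathlib

/-- The degree-`j` term of the Koszul complex on `r` elements, trivialized by the
standard basis: free module on the `j`-element subsets of `Fin r`. -/
abbrev KoszulTerm (R : Type*) [CommRing R] (r j : ℕ) : Type _ :=
  {s : Finset (Fin r) // s.card = j} → R

/-- The Koszul differential `K_{j+1} → K_j` associated to `f : Fin r → R`:
`d(e_{i₁} ∧ ⋯ ∧ e_{i_{j+1}}) = Σ_k (-1)^{k+1} f_{i_k} · e_{i₁} ∧ ⋯ ∧ ê_{i_k} ∧ ⋯`. -/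
noncomputable def koszulD (R : Type*) [CommRing R] (r : ℕ) (f : Fin r → R) (j : ℕ)
    (x : KoszulTerm R r (j + 1)) : KoszulTerm R r j := fun t =>
  ∑ i ∈ t.1ᶜ.attach,
    (-1 : R) ^ ((t.1.filter (· < i.1)).card) * f i.1 *
      x ⟨insert i.1 t.1, by
        rw [Finset.card_insert_of_notMem (Finset.mem_compl.mp i.2), t.2]⟩


section
variable {R : Type*} [CommRing R]

namespace KoszulAux

lemma kt_congr {n j : ℕ} (x : KoszulTerm R n j) {s t : Finset (Fin n)} (hs : s.card = j)
    (ht : t.card = j) (h : s = t) : x ⟨s, hs⟩ = x ⟨t, ht⟩ := by subst h; rfl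

lemma koszulD_apply (r : ℕ) (f : Fin r → R) (j : ℕ) (x : KoszulTerm R r (j + 1))
    (t : {s : Finset (Fin r) // s.card = j}) :
    koszulD R r f j x t = ∑ i : Fin r,
      if h : i ∈ t.1 then 0 else
        (-1 : R) ^ ((t.1.filter (· < i)).card) * f i *
          x ⟨insert i t.1, by rw [Finset.card_insert_of_notMem h, t.2]⟩ := by
  have h1 : koszulD R r f j x t = ∑ i ∈ t.1ᶜ,
      (fun i => if h : i ∈ t.1 then 0 else
        (-1 : R) ^ ((t.1.filter (· < i)).card) * f i *
          x ⟨insert i t.1, by rw [Finset.card_insert_of_notMem h, t.2]⟩) i := by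
    rw [← Finset.sum_attach t.1ᶜ]
    unfold koszulD
    exact Finset.sum_congr rfl (fun i _ => by rw [dif_neg (Finset.mem_compl.mp i.2)])
  rw [h1]
  exact Finset.sum_subset (Finset.subset_univ _) (fun i _ hi => by
      rw [dif_pos (by simpa using hi)])

end KoszulAux

end

-- linearity etc, appended after p1 content
section
variable {R : Type*} [CommRing R]
namespace KoszulAux

lemma koszulD_add (r : ℕ) (f : Fin r → R) (j : ℕ) (x y : KoszulTerm R r (j + 1)) :
    koszulD R r f j (x + y) = koszulD R r f j x + koszulD R r f j y := by
  funext t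
  simp only [Pi.add_apply, koszulD_apply]
  rw [← Finset.sum_add_distrib]
  refine Finset.sum_congr rfl (fun i _ => ?_)
  by_cases h : i ∈ t.1
  · simp [h]
  · simp only [dif_neg h, Pi.add_apply]; ring

lemma koszulD_smul (r : ℕ) (f : Fin r → R) (j : ℕ) (c : R) (x : KoszulTerm R r (j + 1)) :
    koszulD R r f j (c • x) = c • koszulD R r f j x := by
  funext t
  simp only [Pi.smul_apply, koszulD_apply, smul_eq_mul, Finset.mul_sum]
  refine Finset.sum_congr rfl (fun i _ => ?_)
  by_cases h : i ∈ t.1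
  · simp [h]
  · simp only [dif_neg h, Pi.smul_apply, smul_eq_mul]; ring

lemma koszulD_zero (r : ℕ) (f : Fin r → R) (j : ℕ) :
    koszulD R r f j 0 = 0 := by
  funext t
  simp only [koszulD_apply, Pi.zero_apply]
  refine Finset.sum_eq_zero (fun i _ => ?_)
  by_cases h : i ∈ t.1 <;> simp [h]

lemma koszulD_sub (r : ℕ) (f : Fin r → R) (j : ℕ) (x y : KoszulTerm R r (j + 1)) :
    koszulD R r f j (x - y) = koszulD R r f j x - koszulD R r f j y := by
  have := koszulD_add r f j (x - y) y
  rw [sub_add_cancel] at this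
  rw [this]; abel

end KoszulAux
end

section
variable {R : Type*} [CommRing R]
namespace KoszulAux
variable {r : ℕ}

/-- Embed a finset of `Fin r` into `Fin (r+1)` via `castSucc`. -/
def up (s : Finset (Fin r)) : Finset (Fin (r + 1)) := s.map Fin.castSuccEmb

/-- Pull back a finset of `Fin (r+1)` to `Fin r`. -/
def down (s : Finset (Fin (r + 1))) : Finset (Fin r) :=
  Finset.univ.filter (fun i => i.castSucc ∈ s)

@[simp] lemma card_up (s : Finset (Fin r)) : (up s).card = s.card := Finset.card_map _

@[simp] lemma mem_up {i : Fin r} {s : Finset (Fin r)} : i.castSucc ∈ up s ↔ i ∈ s :=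
  Finset.mem_map' _

lemma mem_up_iff {a : Fin (r + 1)} {s : Finset (Fin r)} :
    a ∈ up s ↔ ∃ i ∈ s, i.castSucc = a := by simp only [up, Finset.mem_map]; rfl

lemma last_not_mem_up (s : Finset (Fin r)) : Fin.last r ∉ up s := by
  intro h
  obtain ⟨i, -, hi⟩ := mem_up_iff.mp h
  exact absurd hi (Fin.castSucc_lt_last i).ne

lemma lt_last_of_mem_up {a : Fin (r + 1)} {s : Finset (Fin r)} (h : a ∈ up s) :
    a < Fin.last r := by
  obtain ⟨i, -, hi⟩ := mem_up_iff.mp h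
  exact hi ▸ Fin.castSucc_lt_last i

@[simp] lemma down_up (s : Finset (Fin r)) : down (up s) = s := by
  ext i; simp [down]

lemma up_down {s : Finset (Fin (r + 1))} (h : Fin.last r ∉ s) : up (down s) = s := by
  ext a
  simp only [mem_up_iff, down, Finset.mem_filter, Finset.mem_univ, true_and]
  constructor
  · rintro ⟨i, hi, rfl⟩; exact hi
  · intro ha
    obtain ⟨i, rfl⟩ := Fin.exists_castSucc_eq.mpr (fun he => h (he ▸ ha))
    exact ⟨i, ha, rfl⟩

lemma card_down {s : Finset (Fin (r + 1))} (h : Fin.last r ∉ s) : (down s).card = s.card := by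
  rw [← card_up (down s), up_down h]

lemma up_insert (i : Fin r) (s : Finset (Fin r)) :
    up (insert i s) = insert i.castSucc (up s) := Finset.map_insert _ _ _

lemma filter_lt_up (i : Fin r) (s : Finset (Fin r)) :
    (up s).filter (· < i.castSucc) = up (s.filter (· < i)) := by
  ext a
  simp only [Finset.mem_filter, mem_up_iff]
  constructor
  · rintro ⟨⟨b, hb, rfl⟩, hlt⟩
    exact ⟨b, ⟨hb, by simpa using hlt⟩, rfl⟩
  · rintro ⟨b, ⟨hb, hlt⟩, rfl⟩
    exact ⟨⟨b, hb, rfl⟩, by simpa using hlt⟩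

lemma card_filter_lt_up (i : Fin r) (s : Finset (Fin r)) :
    ((up s).filter (· < i.castSucc)).card = (s.filter (· < i)).card := by
  rw [filter_lt_up, card_up]

lemma filter_lt_last (s : Finset (Fin r)) : (up s).filter (· < Fin.last r) = up s :=
  Finset.filter_true_of_mem (fun _ ha => lt_last_of_mem_up ha)

end KoszulAux
end

section
variable {R : Type*} [CommRing R]
namespace KoszulAux
variable {r : ℕ}

/-- Component of a Koszul chain on subsets not containing `last`. -/
def low {j : ℕ} (x : KoszulTerm R (r + 1) j) : KoszulTerm R r j := fun s =>
  x ⟨up s.1, by rw [card_up, s.2]⟩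

/-- Component of a Koszul chain on subsets containing `last`. -/
def high {j : ℕ} (x : KoszulTerm R (r + 1) (j + 1)) : KoszulTerm R r j := fun s =>
  x ⟨insert (Fin.last r) (up s.1), by
    rw [Finset.card_insert_of_notMem (last_not_mem_up _), card_up, s.2]⟩

@[simp] lemma low_add {j : ℕ} (x y : KoszulTerm R (r + 1) j) :
    low (x + y) = low x + low y := rfl
@[simp] lemma low_sub {j : ℕ} (x y : KoszulTerm R (r + 1) j) :
    low (x - y) = low x - low y := rfl
@[simp] lemma low_smul {j : ℕ} (c : R) (x : KoszulTerm R (r + 1) j) :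
    low (c • x) = c • low x := rfl
@[simp] lemma low_zero {j : ℕ} : low (0 : KoszulTerm R (r + 1) j) = 0 := rfl
@[simp] lemma high_add {j : ℕ} (x y : KoszulTerm R (r + 1) (j + 1)) :
    high (x + y) = high x + high y := rfl
@[simp] lemma high_sub {j : ℕ} (x y : KoszulTerm R (r + 1) (j + 1)) :
    high (x - y) = high x - high y := rfl
@[simp] lemma high_smul {j : ℕ} (c : R) (x : KoszulTerm R (r + 1) (j + 1)) :
    high (c • x) = c • high x := rfl
@[simp] lemma high_zero {j : ℕ} : high (0 : KoszulTerm R (r + 1) (j + 1)) = 0 := rfl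

lemma ext0 {n : ℕ} {x y : KoszulTerm R n 0} (h : x ⟨∅, rfl⟩ = y ⟨∅, rfl⟩) : x = y := by
  funext t
  have ht : t = ⟨∅, rfl⟩ := Subtype.ext (Finset.card_eq_zero.mp t.2)
  rw [ht]; exact h

lemma up_empty : up (∅ : Finset (Fin r)) = ∅ := rfl

lemma low_apply_empty (x : KoszulTerm R (r + 1) 0) :
    low x ⟨∅, rfl⟩ = x ⟨∅, rfl⟩ := kt_congr x _ _ up_empty

lemma ext_low_high {j : ℕ} {x y : KoszulTerm R (r + 1) (j + 1)}
    (h1 : low x = low y) (h2 : high x = high y) : x = y := by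
  funext t
  by_cases h : Fin.last r ∈ t.1
  · have hc : (t.1.erase (Fin.last r)).card = j := by
      rw [Finset.card_erase_of_mem h, t.2]; rfl
    have hdc : (down (t.1.erase (Fin.last r))).card = j := by
      rw [card_down (Finset.notMem_erase _ _), hc]
    have hset : insert (Fin.last r) (up (down (t.1.erase (Fin.last r)))) = t.1 := by
      rw [up_down (Finset.notMem_erase _ _), Finset.insert_erase h]
    calc x t = high x ⟨down (t.1.erase (Fin.last r)), hdc⟩ :=
          (kt_congr x _ _ hset).symm
      _ = high y ⟨down (t.1.erase (Fin.last r)), hdc⟩ := by rw [h2]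
      _ = y t := kt_congr y _ _ hset
  · have hdc : (down t.1).card = j + 1 := by rw [card_down h, t.2]
    have hset : up (down t.1) = t.1 := up_down h
    calc x t = low x ⟨down t.1, hdc⟩ := (kt_congr x _ _ hset).symm
      _ = low y ⟨down t.1, hdc⟩ := by rw [h1]
      _ = y t := kt_congr y _ _ hset

/-- Glue two chains on `Fin r` into a chain on `Fin (r+1)`. -/
def glue {j : ℕ} (a : KoszulTerm R r (j + 1)) (b : KoszulTerm R r j) :
    KoszulTerm R (r + 1) (j + 1) := fun s =>
  if h : Fin.last r ∈ s.1 then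
    b ⟨down (s.1.erase (Fin.last r)), by
      rw [card_down (Finset.notMem_erase _ _), Finset.card_erase_of_mem h, s.2]; rfl⟩
  else a ⟨down s.1, by rw [card_down h, s.2]⟩

@[simp] lemma low_glue {j : ℕ} (a : KoszulTerm R r (j + 1)) (b : KoszulTerm R r j) :
    low (glue a b) = a := by
  funext s
  show glue a b ⟨up s.1, _⟩ = a s
  rw [glue, dif_neg (last_not_mem_up s.1)]
  exact kt_congr a _ _ (by rw [down_up])

@[simp] lemma high_glue {j : ℕ} (a : KoszulTerm R r (j + 1)) (b : KoszulTerm R r j) :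
    high (glue a b) = b := by
  funext s
  show glue a b ⟨insert (Fin.last r) (up s.1), _⟩ = b s
  rw [glue, dif_pos (Finset.mem_insert_self _ _)]
  exact kt_congr b _ _ (by rw [Finset.erase_insert (last_not_mem_up s.1), down_up])

end KoszulAux
end

section
variable {R : Type*} [CommRing R]
namespace KoszulAux
variable {r : ℕ}

lemma low_d (f : Fin (r + 1) → R) (j : ℕ) (x : KoszulTerm R (r + 1) (j + 1)) :
    low (koszulD R (r + 1) f j x) =
      koszulD R r (fun i => f i.castSucc) j (low x)
        + ((-1 : R) ^ j * f (Fin.last r)) • high x := by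
  funext s
  show koszulD R (r + 1) f j x ⟨up s.1, _⟩ = _
  rw [koszulD_apply, Fin.sum_univ_castSucc]
  have hmain : (∑ i : Fin r, if h : i.castSucc ∈ up s.1 then 0 else
      (-1 : R) ^ (((up s.1).filter (· < i.castSucc)).card) * f i.castSucc *
        x ⟨insert i.castSucc (up s.1), by
          rw [Finset.card_insert_of_notMem h, card_up, s.2]⟩) =
      koszulD R r (fun i => f i.castSucc) j (low x) s := by
    rw [koszulD_apply]
    refine Finset.sum_congr rfl (fun i _ => ?_)
    by_cases h : i ∈ s.1
    · rw [dif_pos (mem_up.mpr h), dif_pos h]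
    · rw [dif_neg (fun hc => h (mem_up.mp hc)), dif_neg h, card_filter_lt_up]
      congr 1
      exact kt_congr x _ _ (by rw [← up_insert])
  have hlast : (if h : Fin.last r ∈ up s.1 then 0 else
      (-1 : R) ^ (((up s.1).filter (· < Fin.last r)).card) * f (Fin.last r) *
        x ⟨insert (Fin.last r) (up s.1), by
          rw [Finset.card_insert_of_notMem h, card_up, s.2]⟩) =
      (((-1 : R) ^ j * f (Fin.last r)) • high x) s := by
    have hexp : (((up s.1).filter (· < Fin.last r)).card) = j := by
      rw [filter_lt_last, card_up, s.2]
    rw [dif_neg (last_not_mem_up s.1), hexp]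
    simp only [Pi.smul_apply, smul_eq_mul, mul_assoc]
    rfl
  rw [hmain, hlast]
  rfl

lemma high_d (f : Fin (r + 1) → R) (j : ℕ) (x : KoszulTerm R (r + 1) (j + 2)) :
    high (koszulD R (r + 1) f (j + 1) x) =
      koszulD R r (fun i => f i.castSucc) j (high x) := by
  funext s
  show koszulD R (r + 1) f (j + 1) x ⟨insert (Fin.last r) (up s.1), _⟩ = _
  rw [koszulD_apply, Fin.sum_univ_castSucc, dif_pos (Finset.mem_insert_self _ _), add_zero,
    koszulD_apply]
  refine Finset.sum_congr rfl (fun i _ => ?_)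
  have hmem : i.castSucc ∈ insert (Fin.last r) (up s.1) ↔ i ∈ s.1 := by
    rw [Finset.mem_insert]
    constructor
    · rintro (hc | hc)
      · exact absurd hc (Fin.castSucc_lt_last i).ne
      · exact mem_up.mp hc
    · intro hi; exact Or.inr (mem_up.mpr hi)
  by_cases h : i ∈ s.1
  · rw [dif_pos (hmem.mpr h), dif_pos h]
  · rw [dif_neg (fun hc => h (hmem.mp hc)), dif_neg h]
    have hfilter : ((insert (Fin.last r) (up s.1)).filter (· < i.castSucc)).card =
        ((s.1).filter (· < i)).card := by
      rw [Finset.filter_insert, if_neg (not_lt.mpr (Fin.castSucc_lt_last i).le),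
        card_filter_lt_up]
    rw [hfilter]
    congr 1
    refine kt_congr x _ _ ?_
    rw [Finset.insert_comm, ← up_insert]

end KoszulAux
end

section
variable {R : Type*} [CommRing R]
namespace KoszulAux

lemma d0_apply (r : ℕ) (f : Fin r → R) (y : KoszulTerm R r 1) :
    koszulD R r f 0 y ⟨∅, rfl⟩ = ∑ i : Fin r, f i * y ⟨{i}, Finset.card_singleton i⟩ := by
  rw [koszulD_apply]
  refine Finset.sum_congr rfl (fun i _ => ?_)
  rw [dif_neg (Finset.notMem_empty i)]
  simp only [Finset.filter_empty, Finset.card_empty, pow_zero, one_mul]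
  exact congrArg (f i * ·) (kt_congr y _ _ (insert_empty_eq i))

lemma imageD0 (r : ℕ) (f : Fin r → R) (x : KoszulTerm R r 0) :
    (∃ y : KoszulTerm R r 1, koszulD R r f 0 y = x) ↔
      x ⟨∅, rfl⟩ ∈ Ideal.span (Set.range f) := by
  constructor
  · rintro ⟨y, rfl⟩
    rw [d0_apply]
    exact Submodule.sum_mem _ (fun i _ =>
      Ideal.mul_mem_right _ _ (Ideal.subset_span ⟨i, rfl⟩))
  · intro hx
    obtain ⟨c, hc⟩ := (Submodule.mem_span_range_iff_exists_fun R).mp hx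
    refine ⟨fun t => ∑ i ∈ t.1, c i, ext0 ?_⟩
    rw [d0_apply, ← hc]
    refine Finset.sum_congr rfl (fun i _ => ?_)
    rw [smul_eq_mul, mul_comm]
    congr 1
    exact Finset.sum_singleton _ _

lemma eq_zero_iff_empty (x : KoszulTerm R 0 (j + 1)) : x = 0 := by
  funext t
  exact absurd t.2 (by rw [Finset.eq_empty_of_isEmpty t.1]; simp)

lemma dd_eq_zero : ∀ (r : ℕ) (f : Fin r → R) (j : ℕ) (x : KoszulTerm R r (j + 2)),
    koszulD R r f j (koszulD R r f (j + 1) x) = 0 := by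
  intro r
  induction r with
  | zero =>
    intro f j x
    funext t
    rw [koszulD_apply]
    exact Finset.sum_of_isEmpty _
  | succ r ih =>
    intro f j x
    have hlow : low (koszulD R (r + 1) f j (koszulD R (r + 1) f (j + 1) x)) = 0 := by
      rw [low_d, low_d, high_d, koszulD_add, koszulD_smul, ih]
      have : (-1 : R) ^ (j + 1) * f (Fin.last r) = -((-1 : R) ^ j * f (Fin.last r)) := by
        ring
      rw [this]
      funext s
      simp
    match j with
    | 0 =>
      refine ext0 ?_
      rw [← low_apply_empty (koszulD R (r + 1) f 0 (koszulD R (r + 1) f (0 + 1) x)), hlow]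
      rfl
    | Nat.succ m =>
      refine ext_low_high hlow ?_
      rw [high_d, high_d, ih]
      rfl

end KoszulAux
end

section
variable {R : Type*} [CommRing R]
namespace KoszulAux
open RingTheory.Sequence

lemma reg_step {r : ℕ} (f : Fin (r + 1) → R)
    (h : IsWeaklyRegular R (List.ofFn f)) :
    IsWeaklyRegular R (List.ofFn (fun i : Fin r => f i.castSucc)) ∧
      (∀ a : R, f (Fin.last r) * a ∈ Ideal.span (Set.range (fun i : Fin r => f i.castSucc)) →
        a ∈ Ideal.span (Set.range (fun i : Fin r => f i.castSucc))) := by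
  rw [List.ofFn_succ', List.concat_eq_append, isWeaklyRegular_append_iff] at h
  obtain ⟨h1, h2⟩ := h
  refine ⟨h1, fun a ha => ?_⟩
  have hsr : IsSMulRegular
      (R ⧸ (Ideal.ofList (List.ofFn (fun i : Fin r => f i.castSucc)) • ⊤ : Submodule R R))
      (f (Fin.last r)) := (isWeaklyRegular_singleton_iff _ _).mp h2
  have hI : (Ideal.ofList (List.ofFn (fun i : Fin r => f i.castSucc)) • ⊤ : Submodule R R)
      = Ideal.span (Set.range (fun i : Fin r => f i.castSucc)) := by
    rw [smul_eq_mul, Ideal.mul_top]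
    exact congrArg Ideal.span (Set.ext fun x => List.mem_ofFn' _ x)
  set N : Submodule R R :=
    (Ideal.ofList (List.ofFn (fun i : Fin r => f i.castSucc)) • ⊤ : Submodule R R) with hN
  have hmk : Submodule.Quotient.mk (p := N) (f (Fin.last r) * a) = 0 := by
    rw [Submodule.Quotient.mk_eq_zero, hI]; exact ha
  have h0 : f (Fin.last r) • Submodule.Quotient.mk (p := N) a = 0 := by
    rw [← Submodule.Quotient.mk_smul, smul_eq_mul, hmk]
  have : Submodule.Quotient.mk (p := N) a = 0 := by
    apply hsr
    show f (Fin.last r) • Submodule.Quotient.mk (p := N) a = f (Fin.last r) • (0 : R ⧸ N)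
    rw [smul_zero, h0]
  rw [← hI]
  exact (Submodule.Quotient.mk_eq_zero N).mp this

lemma exactness : ∀ (r : ℕ) (f : Fin r → R), IsWeaklyRegular R (List.ofFn f) →
    ∀ (j : ℕ) (x : KoszulTerm R r (j + 1)), koszulD R r f j x = 0 →
      ∃ y : KoszulTerm R r (j + 2), koszulD R r f (j + 1) y = x := by
  intro r
  induction r with
  | zero =>
    intro f _ j x _
    exact ⟨0, by rw [koszulD_zero, eq_zero_iff_empty x]⟩
  | succ r ih =>
    intro f hreg j x hx
    obtain ⟨h1, h2⟩ := reg_step f hreg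
    set f' : Fin r → R := fun i => f i.castSucc with hf'
    obtain ⟨w, hw⟩ : ∃ w : KoszulTerm R r (j + 1), koszulD R r f' j w = high x := by
      cases j with
      | zero =>
        have hl : koszulD R r f' 0 (low x) + ((-1 : R) ^ 0 * f (Fin.last r)) • high x = 0 := by
          rw [← low_d, hx]; rfl
        have he := congrFun hl ⟨∅, rfl⟩
        simp only [Pi.add_apply, Pi.smul_apply, smul_eq_mul, Pi.zero_apply, pow_zero,
          one_mul] at he
        have hmem : koszulD R r f' 0 (low x) ⟨∅, rfl⟩ ∈ Ideal.span (Set.range f') :=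
          (imageD0 r f' _).mp ⟨low x, rfl⟩
        have hmem2 : f (Fin.last r) * high x ⟨∅, rfl⟩ ∈ Ideal.span (Set.range f') := by
          have heq : f (Fin.last r) * high x ⟨∅, rfl⟩
              = -(koszulD R r f' 0 (low x) ⟨∅, rfl⟩) := by linear_combination he
          rw [heq]
          exact neg_mem hmem
        exact (imageD0 r f' (high x)).mpr (h2 _ hmem2)
      | succ m =>
        refine ih f' h1 m (high x) ?_
        rw [← high_d, hx]; rfl
    set z : KoszulTerm R (r + 1) (j + 1) := x - koszulD R (r + 1) f (j + 1) (glue 0 w) with hz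
    have hdz : koszulD R (r + 1) f j z = 0 := by
      rw [hz, koszulD_sub, hx, dd_eq_zero, sub_zero]
    have hhz : high z = 0 := by
      rw [hz, high_sub, high_d, high_glue, hw, sub_self]
    have hlz : koszulD R r f' j (low z) = 0 := by
      have hld := low_d f j z
      rw [hdz, hhz, smul_zero, add_zero] at hld
      rw [← hld]; rfl
    obtain ⟨u, hu⟩ := ih f' h1 j (low z) hlz
    refine ⟨glue u w, ext_low_high ?_ ?_⟩
    · rw [low_d, low_glue, high_glue, hu]
      have hlowz : low z = low x - ((-1 : R) ^ (j + 1) * f (Fin.last r)) • w := by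
        rw [hz, low_sub, low_d, low_glue, high_glue, koszulD_zero, zero_add]
      rw [hlowz, sub_add_cancel]
    · rw [high_d, high_glue, hw]

end KoszulAux
end

/-- If `f 0, …, f (r-1)` is a regular sequence in `R`, then the
Koszul complex `K_•(f)` is a resolution of `R/(f 0, …, f (r-1))`: it is a complex
(`d ∘ d = 0`), its homology vanishes in all (homologically) positive degrees, and
in degree zero the image of the differential, under the canonical identification
`K_0 ≅ R` (evaluation at `∅`), is exactly the ideal `(f 0, …, f (r-1))`, so that
`H_0 ≅ R/(f 0, …, f (r-1))`. -/
theorem koszul_complex_resolution_of_regular_sequence (R : Type*) [CommRing R]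
    (r : ℕ) (f : Fin r → R)
    (hreg : RingTheory.Sequence.IsRegular R (List.ofFn f)) :
    (∀ j (x : KoszulTerm R r (j + 2)),
        koszulD R r f j (koszulD R r f (j + 1) x) = 0) ∧
    (∀ j (x : KoszulTerm R r (j + 1)), koszulD R r f j x = 0 →
        ∃ y : KoszulTerm R r (j + 2), koszulD R r f (j + 1) y = x) ∧
    (∀ x : KoszulTerm R r 0,
        (∃ y : KoszulTerm R r 1, koszulD R r f 0 y = x) ↔
          x ⟨∅, rfl⟩ ∈ Ideal.span (Set.range f)) := by
  exact ⟨fun j x => KoszulAux.dd_eq_zero r f j x,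
    fun j x hx => KoszulAux.exactness r f hreg.toIsWeaklyRegular j x hx,
    fun x => KoszulAux.imageD0 r f x⟩
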